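/- arXiv:1912.00427 — 3 statements merged into one kernel-verified Lean document; each statement's English description precedes it below -/
import Mathlib

section
/- Let Q be a quiver of type A_n (n ≥ 1), let F be an alien set for Q, and let z be a sink of Q. Then for every vertex x, there is a directed path from x to z in Q^F if and only if there is a directed path from x to z in Q; equivalently, the down-cone of z in the associated poset P_{Q^F} equals Supp I(z). -/
/-! ## Relation-based poset notions -/

/-- `x` and `y` are incomparable with respect to the relation `le`. -/
def RIncomp {α : Type*} (le : α → α → Prop) (x y : α) : Prop := ¬ le x y ∧ ¬ le y x

/-- The strict relation associated to `le`. -/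
def RLt {α : Type*} (le : α → α → Prop) (x y : α) : Prop := le x y ∧ ¬ le y x

/-- `z` is a maximal element with respect to `le`. -/
def RIsMax {α : Type*} (le : α → α → Prop) (z : α) : Prop := ∀ x, le z x → le x z

/-- `z` is a minimal element with respect to `le`. -/
def RIsMin {α : Type*} (le : α → α → Prop) (z : α) : Prop := ∀ x, le x z → le z x

/-- The down-cone `D(a) = {x | x ≤ a}`. -/
def RDown {α : Type*} (le : α → α → Prop) (a : α) : Set α := {x | le x a}

/-- The comparability graph of the relation `le`: vertices are the elements,
edges join comparable distinct elements. -/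
def RCompGraph {α : Type*} (le : α → α → Prop) : SimpleGraph α where
  Adj x y := x ≠ y ∧ (le x y ∨ le y x)
  symm := ⟨fun x y h => ⟨Ne.symm h.1, h.2.symm⟩⟩
  loopless := ⟨fun x h => h.1 rfl⟩

/-- Connectedness of the comparability graph. -/
def RConnected {α : Type*} (le : α → α → Prop) : Prop := (RCompGraph le).Connected

/-- `P` contains `R1` as a peak-subposet: a maximal element `z` together with three
distinct pairwise incomparable elements strictly below `z`. -/
def ContainsR1 {α : Type*} (le : α → α → Prop) : Prop :=
  ∃ z a b c : α, RIsMax le z ∧ a ≠ b ∧ a ≠ c ∧ b ≠ c ∧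
    RIncomp le a b ∧ RIncomp le a c ∧ RIncomp le b c ∧
    RLt le a z ∧ RLt le b z ∧ RLt le c z

/-- `P` contains `R2` as a peak-subposet: distinct maximal `z ≠ z'` and elements
`y < x` with `x < z` and `x < z'`. -/
def ContainsR2 {α : Type*} (le : α → α → Prop) : Prop :=
  ∃ z z' y x : α, RIsMax le z ∧ RIsMax le z' ∧ z ≠ z' ∧
    RLt le y x ∧ RLt le x z ∧ RLt le x z'

/-- `P` contains `R3` as a peak-subposet: three distinct maximal elements with a
common strict lower bound. -/
def ContainsR3 {α : Type*} (le : α → α → Prop) : Prop :=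
  ∃ z₁ z₂ z₃ x : α, RIsMax le z₁ ∧ RIsMax le z₂ ∧ RIsMax le z₃ ∧
    z₁ ≠ z₂ ∧ z₁ ≠ z₃ ∧ z₂ ≠ z₃ ∧
    RLt le x z₁ ∧ RLt le x z₂ ∧ RLt le x z₃

/-- `P` contains the crown `R_{4,n}` as a peak-subposet (with `m = n + 2` maximal
elements `z i` and `m` pairwise incomparable elements `x i`, indices mod `m`). -/
def ContainsCrown {α : Type*} (le : α → α → Prop) (n : ℕ) : Prop :=
  ∃ z x : Fin (n + 2) → α,
    Function.Injective z ∧ Function.Injective x ∧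
    (∀ j, RIsMax le (z j)) ∧
    (∀ i j, x i ≠ z j) ∧
    (∀ i j, i ≠ j → RIncomp le (x i) (x j)) ∧
    (∀ i j, RLt le (x i) (z j) ↔ (j = i ∨ j = i - 1))

/-- A poset (given by its order relation `le`) is of type `A`: it is connected and
contains none of `R1`, `R2`, `R3` and the crowns `R_{4,n}` as a peak-subposet. -/
def IsTypeA {α : Type*} (le : α → α → Prop) : Prop :=
  RConnected le ∧ ¬ ContainsR1 le ∧ ¬ ContainsR2 le ∧ ¬ ContainsR3 le ∧
    ∀ n : ℕ, ¬ ContainsCrown le n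

/-- The set of neighbors of a maximal element `z`: maximal elements `z' ≠ z` whose
down-cone meets the down-cone of `z`. -/
def NeighborSet {α : Type*} (le : α → α → Prop) (z : α) : Set α :=
  {z' | RIsMax le z' ∧ z' ≠ z ∧ (RDown le z ∩ RDown le z').Nonempty}

/-! ## Quivers of type `A_n` and alien sets -/

/-- A quiver of type `A_n`: vertices `Fin n`, and for each pair of consecutive
vertices exactly one arrow joining them (in one of the two orientations), and no
other arrows. -/
structure TypeAQuiver (n : ℕ) where
  arr : Fin n → Fin n → Prop
  adjacent : ∀ x y : Fin n, arr x y → (y.val = x.val + 1 ∨ x.val = y.val + 1)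
  exactlyOne : ∀ x y : Fin n, y.val = x.val + 1 → (arr x y ↔ ¬ arr y x)

/-- `z` is a sink: no arrow starts at `z`. -/
def IsSinkQ {n : ℕ} (Q : TypeAQuiver n) (z : Fin n) : Prop := ∀ y, ¬ Q.arr z y

/-- `z` is a source: no arrow ends at `z`. -/
def IsSourceQ {n : ℕ} (Q : TypeAQuiver n) (z : Fin n) : Prop := ∀ y, ¬ Q.arr y z

/-- `Supp I(z)`: the set of vertices admitting a directed path to `z` in `Q`. -/
def SuppI {n : ℕ} (Q : TypeAQuiver n) (z : Fin n) : Set (Fin n) :=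
  {x | Relation.ReflTransGen Q.arr x z}

/-- The arrow relation of the quiver `Q^F` obtained from `Q` by adding the extra
arrows in `F` (an extra arrow is recorded as the pair (source, target)). -/
def QFarr {n : ℕ} (Q : TypeAQuiver n) (F : Set (Fin n × Fin n)) :
    Fin n → Fin n → Prop :=
  fun x y => Q.arr x y ∨ (x, y) ∈ F

/-- `F` is an alien set for the type `A_n` quiver `Q`. -/
structure IsAlienSet {n : ℕ} (Q : TypeAQuiver n) (F : Set (Fin n × Fin n)) : Prop where
  /-- (a) Source and target of each extra arrow lie in `Supp I(z)` for some sink `z`. -/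
  sameSupp : ∀ p ∈ F, ∃ z : Fin n, IsSinkQ Q z ∧ p.1 ∈ SuppI Q z ∧ p.2 ∈ SuppI Q z
  /-- (b) The target of an extra arrow is not a source of `Q`, unless it is extremal. -/
  targetNotSource : ∀ p ∈ F, IsSourceQ Q p.2 → (p.2.val = 0 ∨ p.2.val = n - 1)
  /-- (c) Each extra arrow is the unique directed path in `Q^F` from its source to
  its target: every such path is the single arrow itself. -/
  uniquePath : ∀ p ∈ F, ∀ l : List (Fin n),
    List.Chain (QFarr Q F) p.1 (l ++ [p.2]) → l = []
  /-- (d) `Q^F` is acyclic. -/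
  acyclic : ∀ x : Fin n, ¬ Relation.TransGen (QFarr Q F) x x

/-- The order relation of the poset `P_{Q^F}` associated to the acyclic quiver
`Q^F`: `x ≤ y` iff there is a (possibly trivial) directed path from `x` to `y`. -/
def leQF {n : ℕ} (Q : TypeAQuiver n) (F : Set (Fin n × Fin n)) :
    Fin n → Fin n → Prop :=
  Relation.ReflTransGen (QFarr Q F)

/-- In a type `A_n` quiver, a vertex that is not a source, or is extremal, has at
most one outgoing arrow. -/
lemma atMostOneOut {n : ℕ} (Q : TypeAQuiver n) (x : Fin n)
    (h : (∃ w, Q.arr w x) ∨ x.val = 0 ∨ x.val = n - 1) :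
    ∀ a b, Q.arr x a → Q.arr x b → a = b := by
  intro a b ha hb
  have hxlt := x.isLt
  rcases Q.adjacent x a ha with h1 | h1 <;> rcases Q.adjacent x b hb with h2 | h2
  · exact Fin.ext (h1.trans h2.symm)
  · exfalso
    rcases h with ⟨w, hw⟩ | h0 | hl
    · rcases Q.adjacent w x hw with h3 | h3
      · have hwb : w = b := Fin.ext (by omega)
        subst hwb
        exact ((Q.exactlyOne w x h3).mp hw) hb
      · have hwa : w = a := Fin.ext (by omega)
        subst hwa
        exact ((Q.exactlyOne x w h1).mp ha) hw
    · omega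
    · have := a.isLt; omega
  · exfalso
    rcases h with ⟨w, hw⟩ | h0 | hl
    · rcases Q.adjacent w x hw with h3 | h3
      · have hwa : w = a := Fin.ext (by omega)
        subst hwa
        exact ((Q.exactlyOne w x h3).mp hw) ha
      · have hwb : w = b := Fin.ext (by omega)
        subst hwb
        exact ((Q.exactlyOne x w h2).mp hb) hw
    · omega
    · have := b.isLt; omega
  · exact Fin.ext (by omega)

/-- From a vertex with at most one outgoing arrow, the reachable sink is unique. -/
lemma sink_unique {n : ℕ} (Q : TypeAQuiver n) {z₁ z₂ : Fin n}
    (hz₁ : IsSinkQ Q z₁) (hz₂ : IsSinkQ Q z₂) {x : Fin n}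
    (h1 : Relation.ReflTransGen Q.arr x z₁) :
    (∀ a b, Q.arr x a → Q.arr x b → a = b) →
      Relation.ReflTransGen Q.arr x z₂ → z₁ = z₂ := by
  induction h1 using Relation.ReflTransGen.head_induction_on with
  | refl =>
    intro _ h2
    rcases h2.cases_head with rfl | ⟨w, hw, _⟩
    · rfl
    · exact absurd hw (hz₁ w)
  | head hab hbc ih =>
    intro hx h2
    rcases h2.cases_head with rfl | ⟨w, hw, hw2⟩
    · exact absurd hab (hz₂ _)
    · have hwc := hx _ _ hw hab
      subst hwc
      exact ih (atMostOneOut Q _ (Or.inl ⟨_, hab⟩)) hw2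

/-- For a quiver `Q` of type `A_n` (`n ≥ 1`), an alien set `F` for
`Q`, and a sink `z` of `Q`: a vertex `x` admits a directed path to `z` in `Q^F`
iff it does in `Q`; equivalently, the down-cone of `z` in `P_{Q^F}` is `Supp I(z)`. -/
theorem downcone_of_sink_eq_suppI {n : ℕ} (hn : 1 ≤ n)
    (Q : TypeAQuiver n) (F : Set (Fin n × Fin n)) (hF : IsAlienSet Q F)
    (z : Fin n) (hz : IsSinkQ Q z) :
    (∀ x : Fin n, leQF Q F x z ↔ Relation.ReflTransGen Q.arr x z) ∧
      RDown (leQF Q F) z = SuppI Q z := by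
  have key : ∀ x : Fin n, leQF Q F x z → Relation.ReflTransGen Q.arr x z := by
    intro x h
    induction h using Relation.ReflTransGen.head_induction_on with
    | refl => exact Relation.ReflTransGen.refl
    | @head a c hab hbc ih =>
      rcases hab with hq | hf
      · exact ih.head hq
      · obtain ⟨z', hz', hs, ht⟩ := hF.sameSupp _ hf
        have huniq : ∀ u v, Q.arr c u → Q.arr c v → u = v := by
          apply atMostOneOut
          by_cases hsrc : IsSourceQ Q c
          · exact Or.inr (hF.targetNotSource _ hf hsrc)
          · left
            simp only [IsSourceQ, not_forall, not_not] at hsrc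
            exact hsrc
        have hzz : z' = z := sink_unique Q hz' hz ht huniq ih
        rw [hzz] at hs
        exact hs
  have hmono : ∀ x : Fin n, Relation.ReflTransGen Q.arr x z → leQF Q F x z :=
    fun x h => Relation.ReflTransGen.mono (p := QFarr Q F) (fun a b hab => Or.inl hab) x z h
  refine ⟨fun x => ⟨key x, hmono x⟩, ?_⟩
  ext x
  exact ⟨fun h => key x h, fun h => hmono x h⟩
end

section
/- Let P be a finite poset with n elements having exactly one maximal element and not containing R1 as a peak-subposet. Then there exist a quiver Q of type A_n with exactly one sink and an alien set F for Q such that P is order-isomorphic to the poset P_{Q^F} associated to the quiver Q^F. -/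
/-! ## Auxiliary lemmas for the realization theorem -/

private lemma chain_append_transGen {α : Type*} {r : α → α → Prop} :
    ∀ (l : List α) (x y : α), List.Chain r x (l ++ [y]) → Relation.TransGen r x y := by
  intro l
  induction l with
  | nil =>
    intro x y h
    rw [List.nil_append] at h; simp only [List.Chain] at h; rw [List.isChain_cons_cons] at h
    exact Relation.TransGen.single h.1
  | cons w l ih =>
    intro x y h
    rw [List.cons_append] at h; simp only [List.Chain] at h; rw [List.isChain_cons_cons] at h
    exact Relation.TransGen.head h.1 (ih w y h.2)


private lemma dilworth2 {P : Type*} [PartialOrder P] [DecidableEq P] (s : Finset P)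
    (h3 : ∀ a ∈ s, ∀ b ∈ s, ∀ c ∈ s, a ≠ b → a ≠ c → b ≠ c →
      (¬a ≤ b ∧ ¬b ≤ a) → (¬a ≤ c ∧ ¬c ≤ a) → (¬b ≤ c ∧ ¬c ≤ b) → False) :
    ∃ A B : Finset P, A ∪ B = s ∧ Disjoint A B ∧
      IsChain (· ≤ ·) (A : Set P) ∧ IsChain (· ≤ ·) (B : Set P) := by
  classical
  revert h3
  induction s using Finset.strongInduction with
  | _ s ih =>
  intro h3
  rcases s.eq_empty_or_nonempty with rfl | hne
  · exact ⟨∅, ∅, by simp, by simp, by simp, by simp⟩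
  obtain ⟨t, hts, htmax⟩ := s.exists_maximal hne
  obtain ⟨b, hbf, hbmin⟩ := (s.filter (· ≤ t)).exists_minimal
    ⟨t, Finset.mem_filter.2 ⟨hts, le_rfl⟩⟩
  have hbs : b ∈ s := (Finset.mem_filter.1 hbf).1
  have hbt : b ≤ t := (Finset.mem_filter.1 hbf).2
  have hbminS : ∀ y ∈ s, ¬ y < b := fun y hy hlt =>
    hlt.ne (le_antisymm hlt.le (hbmin (Finset.mem_filter.2 ⟨hy, hlt.le.trans hbt⟩) hlt.le))
  set C : Finset P := {b, t} with hC
  have hCs : C ⊆ s := by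
    intro x hx
    rcases Finset.mem_insert.1 hx with rfl | hx
    · exact hbs
    · exact Finset.mem_singleton.1 hx ▸ hts
  by_cases hch : IsChain (· ≤ ·) ((s \ C : Finset P) : Set P)
  · refine ⟨s \ C, C, Finset.sdiff_union_of_subset hCs, Finset.sdiff_disjoint, hch, ?_⟩
    intro x hx y hy hne
    simp only [hC, Finset.coe_insert, Finset.coe_singleton, Set.mem_insert_iff,
      Set.mem_singleton_iff] at hx hy
    rcases hx with rfl | rfl <;> rcases hy with rfl | rfl
    · exact absurd rfl hne
    · exact Or.inl hbt
    · exact Or.inr hbt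
    · exact absurd rfl hne
  · rw [IsChain] at hch
    simp only [Set.Pairwise, Finset.mem_coe] at hch
    push_neg at hch
    obtain ⟨a1, ha1, a2, ha2, hne12, hc1, hc2⟩ := hch
    have ha1s : a1 ∈ s := (Finset.mem_sdiff.1 ha1).1
    have ha2s : a2 ∈ s := (Finset.mem_sdiff.1 ha2).1
    have ha1C : a1 ∉ C := (Finset.mem_sdiff.1 ha1).2
    have ha2C : a2 ∉ C := (Finset.mem_sdiff.1 ha2).2
    set D : Finset P := s.filter (fun x => x ≤ a1 ∨ x ≤ a2) with hD
    set U : Finset P := s.filter (fun x => a1 ≤ x ∨ a2 ≤ x) with hU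
    have htD : t ∉ D := by
      intro h
      rcases (Finset.mem_filter.1 h).2 with h' | h'
      · rcases eq_or_lt_of_le h' with rfl | h''
        · exact ha1C (Finset.mem_insert.2 (Or.inr (Finset.mem_singleton_self _)))
        · exact (h''.ne (le_antisymm h''.le (htmax ha1s h''.le)))
      · rcases eq_or_lt_of_le h' with rfl | h''
        · exact ha2C (Finset.mem_insert.2 (Or.inr (Finset.mem_singleton_self _)))
        · exact (h''.ne (le_antisymm h''.le (htmax ha2s h''.le)))
    have hbU : b ∉ U := by
      intro h
      rcases (Finset.mem_filter.1 h).2 with h' | h'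
      · rcases eq_or_lt_of_le h' with rfl | h''
        · exact ha1C (Finset.mem_insert_self _ _)
        · exact hbminS a1 ha1s h''
      · rcases eq_or_lt_of_le h' with rfl | h''
        · exact ha2C (Finset.mem_insert_self _ _)
        · exact hbminS a2 ha2s h''
    have hDsub : D ⊂ s :=
      (Finset.ssubset_iff_of_subset (Finset.filter_subset _ _)).2 ⟨t, hts, htD⟩
    have hUsub : U ⊂ s :=
      (Finset.ssubset_iff_of_subset (Finset.filter_subset _ _)).2 ⟨b, hbs, hbU⟩
    have h3D : ∀ a ∈ D, ∀ b ∈ D, ∀ c ∈ D, a ≠ b → a ≠ c → b ≠ c →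
        (¬a ≤ b ∧ ¬b ≤ a) → (¬a ≤ c ∧ ¬c ≤ a) → (¬b ≤ c ∧ ¬c ≤ b) → False := by
      intro a ha b hb c hc
      exact h3 a (Finset.filter_subset _ _ ha) b (Finset.filter_subset _ _ hb)
        c (Finset.filter_subset _ _ hc)
    have h3U : ∀ a ∈ U, ∀ b ∈ U, ∀ c ∈ U, a ≠ b → a ≠ c → b ≠ c →
        (¬a ≤ b ∧ ¬b ≤ a) → (¬a ≤ c ∧ ¬c ≤ a) → (¬b ≤ c ∧ ¬c ≤ b) → False := by
      intro a ha b hb c hc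
      exact h3 a (Finset.filter_subset _ _ ha) b (Finset.filter_subset _ _ hb)
        c (Finset.filter_subset _ _ hc)
    have ha1D : a1 ∈ D := Finset.mem_filter.2 ⟨ha1s, Or.inl le_rfl⟩
    have ha2D : a2 ∈ D := Finset.mem_filter.2 ⟨ha2s, Or.inr le_rfl⟩
    have ha1U : a1 ∈ U := Finset.mem_filter.2 ⟨ha1s, Or.inl le_rfl⟩
    have ha2U : a2 ∈ U := Finset.mem_filter.2 ⟨ha2s, Or.inr le_rfl⟩
    have hsplit : ∀ (E : Finset P), a1 ∈ E → a2 ∈ E →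
        (∃ A B : Finset P, A ∪ B = E ∧ Disjoint A B ∧
          IsChain (· ≤ ·) (A : Set P) ∧ IsChain (· ≤ ·) (B : Set P)) →
        ∃ A B : Finset P, A ∪ B = E ∧ Disjoint A B ∧
          IsChain (· ≤ ·) (A : Set P) ∧ IsChain (· ≤ ·) (B : Set P) ∧
          a1 ∈ A ∧ a2 ∈ B := by
      intro E h1E h2E ⟨A, B, hun, hdis, hchA, hchB⟩
      have h1 : a1 ∈ A ∪ B := hun ▸ h1E
      have h2 : a2 ∈ A ∪ B := hun ▸ h2E
      rcases Finset.mem_union.1 h1 with h1' | h1' <;>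
        rcases Finset.mem_union.1 h2 with h2' | h2'
      · exact absurd (hchA (Finset.mem_coe.2 h1') (Finset.mem_coe.2 h2') hne12)
          (by tauto)
      · exact ⟨A, B, hun, hdis, hchA, hchB, h1', h2'⟩
      · exact ⟨B, A, by rw [Finset.union_comm]; exact hun, hdis.symm, hchB, hchA, h1', h2'⟩
      · exact absurd (hchB (Finset.mem_coe.2 h1') (Finset.mem_coe.2 h2') hne12)
          (by tauto)
    obtain ⟨DA, DB, hDun, hDdis, hDAch, hDBch, ha1DA, ha2DB⟩ :=
      hsplit D ha1D ha2D (ih D hDsub h3D)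
    obtain ⟨UA, UB, hUun, hUdis, hUAch, hUBch, ha1UA, ha2UB⟩ :=
      hsplit U ha1U ha2U (ih U hUsub h3U)
    have hDAle : ∀ x ∈ DA, x ≤ a1 := by
      intro x hx
      rcases eq_or_ne x a1 with rfl | hne
      · exact le_rfl
      have hxD : x ∈ D := hDun ▸ Finset.mem_union_left _ hx
      rcases hDAch (Finset.mem_coe.2 hx) (Finset.mem_coe.2 ha1DA) hne with h | h
      · exact h
      · rcases (Finset.mem_filter.1 hxD).2 with h' | h'
        · exact h'
        · exact absurd (h.trans h') hc1
    have hDBle : ∀ x ∈ DB, x ≤ a2 := by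
      intro x hx
      rcases eq_or_ne x a2 with rfl | hne
      · exact le_rfl
      have hxD : x ∈ D := hDun ▸ Finset.mem_union_right _ hx
      rcases hDBch (Finset.mem_coe.2 hx) (Finset.mem_coe.2 ha2DB) hne with h | h
      · exact h
      · rcases (Finset.mem_filter.1 hxD).2 with h' | h'
        · exact absurd (h.trans h') hc2
        · exact h'
    have hUAge : ∀ x ∈ UA, a1 ≤ x := by
      intro x hx
      rcases eq_or_ne x a1 with rfl | hne
      · exact le_rfl
      have hxU : x ∈ U := hUun ▸ Finset.mem_union_left _ hx
      rcases hUAch (Finset.mem_coe.2 hx) (Finset.mem_coe.2 ha1UA) hne with h | h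
      · rcases (Finset.mem_filter.1 hxU).2 with h' | h'
        · exact h'
        · exact absurd (h'.trans h) hc2
      · exact h
    have hUBge : ∀ x ∈ UB, a2 ≤ x := by
      intro x hx
      rcases eq_or_ne x a2 with rfl | hne
      · exact le_rfl
      have hxU : x ∈ U := hUun ▸ Finset.mem_union_right _ hx
      rcases hUBch (Finset.mem_coe.2 hx) (Finset.mem_coe.2 ha2UB) hne with h | h
      · rcases (Finset.mem_filter.1 hxU).2 with h' | h'
        · exact absurd (h'.trans h) hc1
        · exact h'
      · exact h
    have hDU : D ∪ U = s := by
      apply Finset.Subset.antisymm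
      · exact Finset.union_subset (Finset.filter_subset _ _) (Finset.filter_subset _ _)
      · intro x hx
        by_contra hxDU
        rw [Finset.mem_union] at hxDU
        push_neg at hxDU
        obtain ⟨hxD, hxU⟩ := hxDU
        have h1 : ¬(x ≤ a1 ∨ x ≤ a2) := fun h => hxD (Finset.mem_filter.2 ⟨hx, h⟩)
        have h2 : ¬(a1 ≤ x ∨ a2 ≤ x) := fun h => hxU (Finset.mem_filter.2 ⟨hx, h⟩)
        push_neg at h1 h2
        have hxa1 : x ≠ a1 := fun h => h1.1 (h ▸ le_rfl)
        have hxa2 : x ≠ a2 := fun h => h1.2 (h ▸ le_rfl)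
        exact h3 x hx a1 ha1s a2 ha2s hxa1 hxa2 hne12
          ⟨h1.1, h2.1⟩ ⟨h1.2, h2.2⟩ ⟨hc1, hc2⟩
    refine ⟨DA ∪ UA, DB ∪ UB, ?_, ?_, ?_, ?_⟩
    · rw [Finset.union_union_union_comm, hDun, hUun, hDU]
    · rw [Finset.disjoint_union_left, Finset.disjoint_union_right,
        Finset.disjoint_union_right]
      refine ⟨⟨hDdis, ?_⟩, ?_, hUdis⟩
      · rw [Finset.disjoint_left]
        intro x hx hx'
        exact absurd ((hUBge x hx').trans (hDAle x hx)) hc2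
      · rw [Finset.disjoint_left]
        intro x hx hx'
        exact absurd ((hUAge x hx).trans (hDBle x hx')) hc1
    · intro x hx y hy hne
      simp only [Finset.coe_union, Set.mem_union, Finset.mem_coe] at hx hy
      rcases hx with hx | hx <;> rcases hy with hy | hy
      · exact hDAch (Finset.mem_coe.2 hx) (Finset.mem_coe.2 hy) hne
      · exact Or.inl ((hDAle x hx).trans (hUAge y hy))
      · exact Or.inr ((hDAle y hy).trans (hUAge x hx))
      · exact hUAch (Finset.mem_coe.2 hx) (Finset.mem_coe.2 hy) hne
    · intro x hx y hy hne
      simp only [Finset.coe_union, Set.mem_union, Finset.mem_coe] at hx hy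
      rcases hx with hx | hx <;> rcases hy with hy | hy
      · exact hDBch (Finset.mem_coe.2 hx) (Finset.mem_coe.2 hy) hne
      · exact Or.inl ((hDBle x hx).trans (hUBge y hy))
      · exact Or.inr ((hDBle y hy).trans (hUBge x hx))
      · exact hUBch (Finset.mem_coe.2 hx) (Finset.mem_coe.2 hy) hne

/-- A finite poset with `n` elements, exactly one maximal element,
and not containing `R1` as a peak-subposet is order-isomorphic to the poset
`P_{Q^F}` for some quiver `Q` of type `A_n` with exactly one sink and an alien set
`F` for `Q`. -/
theorem one_peak_realization {P : Type*} [Fintype P] [PartialOrder P] {n : ℕ}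
    (hcard : Fintype.card P = n)
    (hone : ∃! z : P, RIsMax (fun x y : P => x ≤ y) z)
    (hR1 : ¬ ContainsR1 (fun x y : P => x ≤ y)) :
    ∃ Q : TypeAQuiver n, (∃! z : Fin n, IsSinkQ Q z) ∧
      ∃ F : Set (Fin n × Fin n), IsAlienSet Q F ∧
        ∃ e : P ≃ Fin n, ∀ x y : P, x ≤ y ↔ leQF Q F (e x) (e y) := by
  classical
  obtain ⟨z, hzmax, hzuniq⟩ := hone
  have hzle : ∀ x : P, x ≤ z := by
    intro x
    obtain ⟨mm, hm, hmax⟩ := (Finset.univ.filter (fun y => x ≤ y)).exists_maximal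
      ⟨x, Finset.mem_filter.2 ⟨Finset.mem_univ _, le_rfl⟩⟩
    have hxm : x ≤ mm := (Finset.mem_filter.1 hm).2
    have hmm : RIsMax (fun a b : P => a ≤ b) mm := by
      intro w hw
      have hwmem : w ∈ Finset.univ.filter (fun y => x ≤ y) :=
        Finset.mem_filter.2 ⟨Finset.mem_univ _, hxm.trans hw⟩
      rcases eq_or_lt_of_le hw with rfl | h
      · exact le_rfl
      · exact absurd (le_antisymm h.le (hmax hwmem h.le)) h.ne
    exact (hzuniq mm hmm) ▸ hxm
  have h3 : ∀ a ∈ Finset.univ.erase z, ∀ b ∈ Finset.univ.erase z,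
      ∀ c ∈ Finset.univ.erase z, a ≠ b → a ≠ c → b ≠ c →
      (¬a ≤ b ∧ ¬b ≤ a) → (¬a ≤ c ∧ ¬c ≤ a) → (¬b ≤ c ∧ ¬c ≤ b) → False := by
    intro a ha b hb c hc hab hac hbc h1 h2 h3'
    have hlt : ∀ x ∈ Finset.univ.erase z, RLt (fun a b : P => a ≤ b) x z := fun x hx =>
      ⟨hzle x, fun h => (Finset.mem_erase.1 hx).1 (le_antisymm (hzle x) h)⟩
    exact hR1 ⟨z, a, b, c, hzmax, hab, hac, hbc, h1, h2, h3',
      hlt a ha, hlt b hb, hlt c hc⟩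
  obtain ⟨C1, C2, hun, hdis, hch1, hch2⟩ := dilworth2 (Finset.univ.erase z) h3
  have hzC1 : z ∉ C1 := fun h =>
    (Finset.mem_erase.1 (hun ▸ Finset.mem_union_left C2 h)).1 rfl
  have hzC2 : z ∉ C2 := fun h =>
    (Finset.mem_erase.1 (hun ▸ Finset.mem_union_right C1 h)).1 rfl
  have hnval : C1.card + C2.card + 1 = n := by
    have h1 : (C1 ∪ C2).card = C1.card + C2.card := Finset.card_union_of_disjoint hdis
    rw [hun] at h1
    have h2 : (Finset.univ.erase z).card = Fintype.card P - 1 := by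
      rw [Finset.card_erase_of_mem (Finset.mem_univ _), Finset.card_univ]
    have h4 : 1 ≤ Fintype.card P := Fintype.card_pos_iff.2 ⟨z⟩
    omega
  set k := C1.card with hkdef
  set m := C2.card with hmdef
  have hkn : k < n := by omega
  -- rank functions
  have hr1lt : ∀ x ∈ C1, (C1.filter (fun b => b < x)).card < k := by
    intro x hx
    rw [hkdef]
    apply Finset.card_lt_card
    rw [Finset.ssubset_iff_of_subset (Finset.filter_subset _ _)]
    exact ⟨x, hx, fun h => (lt_irrefl x) (Finset.mem_filter.1 h).2⟩
  have hr2lt : ∀ x ∈ C2, (C2.filter (fun b => b < x)).card < m := by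
    intro x hx
    rw [hmdef]
    apply Finset.card_lt_card
    rw [Finset.ssubset_iff_of_subset (Finset.filter_subset _ _)]
    exact ⟨x, hx, fun h => (lt_irrefl x) (Finset.mem_filter.1 h).2⟩
  have hr1mono : ∀ x ∈ C1, ∀ y ∈ C1, x < y →
      (C1.filter (fun b => b < x)).card < (C1.filter (fun b => b < y)).card := by
    intro x hx y hy hxy
    apply Finset.card_lt_card
    have hsub : C1.filter (fun b => b < x) ⊆ C1.filter (fun b => b < y) := by
      intro c hc
      rw [Finset.mem_filter] at hc ⊢
      exact ⟨hc.1, hc.2.trans hxy⟩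
    rw [Finset.ssubset_iff_of_subset hsub]
    exact ⟨x, Finset.mem_filter.2 ⟨hx, hxy⟩, fun h => (lt_irrefl x) (Finset.mem_filter.1 h).2⟩
  have hr2mono : ∀ x ∈ C2, ∀ y ∈ C2, x < y →
      (C2.filter (fun b => b < x)).card < (C2.filter (fun b => b < y)).card := by
    intro x hx y hy hxy
    apply Finset.card_lt_card
    have hsub : C2.filter (fun b => b < x) ⊆ C2.filter (fun b => b < y) := by
      intro c hc
      rw [Finset.mem_filter] at hc ⊢
      exact ⟨hc.1, hc.2.trans hxy⟩
    rw [Finset.ssubset_iff_of_subset hsub]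
    exact ⟨x, Finset.mem_filter.2 ⟨hx, hxy⟩, fun h => (lt_irrefl x) (Finset.mem_filter.1 h).2⟩
  have htri : ∀ x : P, x ∈ C1 ∨ x = z ∨ x ∈ C2 := by
    intro x
    by_cases hxz : x = z
    · exact Or.inr (Or.inl hxz)
    · have hx : x ∈ C1 ∪ C2 := by
        rw [hun]; exact Finset.mem_erase.2 ⟨hxz, Finset.mem_univ _⟩
      rcases Finset.mem_union.1 hx with h | h
      · exact Or.inl h
      · exact Or.inr (Or.inr h)
  have hC1ne : ∀ x ∈ C1, x ≠ z := fun x hx h => hzC1 (h ▸ hx)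
  have hC2ne : ∀ x ∈ C2, x ≠ z := fun x hx h => hzC2 (h ▸ hx)
  have hd12 : ∀ x, x ∈ C1 → x ∉ C2 := fun x h1 h2 => Finset.disjoint_left.1 hdis h1 h2
  -- the labeling function
  set f : P → ℕ := fun x => if x ∈ C1 then (C1.filter (fun b => b < x)).card
    else if x = z then k else n - 1 - (C2.filter (fun b => b < x)).card with hfdef
  have hf1 : ∀ x ∈ C1, f x = (C1.filter (fun b => b < x)).card := by
    intro x hx; simp only [hfdef, if_pos hx]
  have hfz : f z = k := by simp [hfdef, hzC1]
  have hf2 : ∀ x ∈ C2, f x = n - 1 - (C2.filter (fun b => b < x)).card := by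
    intro x hx
    have h1 : x ∉ C1 := fun h => hd12 x h hx
    simp only [hfdef, if_neg h1, if_neg (hC2ne x hx)]
  have hrange1 : ∀ x ∈ C1, f x < k := fun x hx => (hf1 x hx) ▸ hr1lt x hx
  have hrange2 : ∀ x ∈ C2, k < f x ∧ f x ≤ n - 1 := by
    intro x hx
    have h1 := hr2lt x hx
    rw [hf2 x hx]
    omega
  have hfn : ∀ x, f x < n := by
    intro x
    rcases htri x with h | h | h
    · have := hrange1 x h; omega
    · rw [h, hfz]; omega
    · have := hrange2 x h; omega
  have hinj : Function.Injective (fun x : P => (⟨f x, hfn x⟩ : Fin n)) := by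
    intro a b hab
    have hfab : f a = f b := congrArg Fin.val hab
    by_contra hne
    rcases htri a with ha | ha | ha <;> rcases htri b with hb | hb | hb
    · rw [hf1 a ha, hf1 b hb] at hfab
      rcases hch1 (Finset.mem_coe.2 ha) (Finset.mem_coe.2 hb) hne with h | h
      · exact absurd hfab (Nat.ne_of_lt (hr1mono a ha b hb (lt_of_le_of_ne h hne)))
      · exact absurd hfab.symm
          (Nat.ne_of_lt (hr1mono b hb a ha (lt_of_le_of_ne h (Ne.symm hne))))
    · rw [hb, hfz] at hfab
      have := hrange1 a ha; omega
    · have := hrange1 a ha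
      have := hrange2 b hb; omega
    · rw [ha, hfz] at hfab
      have := hrange1 b hb; omega
    · exact hne (ha.trans hb.symm)
    · rw [ha, hfz] at hfab
      have := hrange2 b hb; omega
    · have := hrange2 a ha
      have := hrange1 b hb; omega
    · rw [hb, hfz] at hfab
      have := hrange2 a ha; omega
    · rw [hf2 a ha, hf2 b hb] at hfab
      have hba := hr2lt a ha
      have hbb := hr2lt b hb
      have hfeq : (C2.filter (fun b => b < a)).card = (C2.filter (fun c => c < b)).card := by
        omega
      rcases hch2 (Finset.mem_coe.2 ha) (Finset.mem_coe.2 hb) hne with h | h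
      · exact absurd hfeq (Nat.ne_of_lt (hr2mono a ha b hb (lt_of_le_of_ne h hne)))
      · exact absurd hfeq.symm
          (Nat.ne_of_lt (hr2mono b hb a ha (lt_of_le_of_ne h (Ne.symm hne))))
  let e : P ≃ Fin n := Equiv.ofBijective (fun x : P => (⟨f x, hfn x⟩ : Fin n))
    ((Fintype.bijective_iff_injective_and_card _).2
      ⟨hinj, by rw [Fintype.card_fin, hcard]⟩)
  have hgval : ∀ u : Fin n, f (e.symm u) = u.val :=
    fun u => congrArg Fin.val (e.apply_symm_apply u)
  have hloc1 : ∀ u : Fin n, u.val < k → e.symm u ∈ C1 := by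
    intro u hu
    rcases htri (e.symm u) with h | h | h
    · exact h
    · exfalso; have h2 := hgval u; rw [h, hfz] at h2; omega
    · exfalso; have h2 := hrange2 _ h; have h3 := hgval u; omega
  have hlocz : ∀ u : Fin n, u.val = k → e.symm u = z := by
    intro u hu
    rcases htri (e.symm u) with h | h | h
    · exfalso; have h2 := hrange1 _ h; have h3 := hgval u; omega
    · exact h
    · exfalso; have h2 := hrange2 _ h; have h3 := hgval u; omega
  have hloc2 : ∀ u : Fin n, k < u.val → e.symm u ∈ C2 := by
    intro u hu
    rcases htri (e.symm u) with h | h | h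
    · exfalso; have h2 := hrange1 _ h; have h3 := hgval u; omega
    · exfalso; have h2 := hgval u; rw [h, hfz] at h2; omega
    · exact h
  -- the quiver
  let Q : TypeAQuiver n := {
    arr := fun x y => (y.val = x.val + 1 ∧ y.val ≤ k) ∨ (x.val = y.val + 1 ∧ k ≤ y.val)
    adjacent := by rintro x y (⟨h, _⟩ | ⟨h, _⟩); exacts [Or.inl h, Or.inr h]
    exactlyOne := by
      intro x y hxy
      constructor
      · rintro (⟨_, h2⟩ | ⟨h1, _⟩) h'
        · rcases h' with ⟨h3, _⟩ | ⟨_, h4⟩ <;> omega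
        · omega
      · intro hne
        by_cases hyk : y.val ≤ k
        · exact Or.inl ⟨hxy, hyk⟩
        · exact absurd (Or.inr ⟨hxy, by omega⟩) hne }
  have hsink_iff : ∀ v : Fin n, IsSinkQ Q v ↔ v.val = k := by
    intro v
    constructor
    · intro hv
      by_contra hvk
      have hvn := v.isLt
      rcases Nat.lt_or_ge v.val k with h | h
      · exact hv ⟨v.val + 1, by omega⟩ (Or.inl ⟨rfl, show v.val + 1 ≤ k by omega⟩)
      · have hgt : k < v.val := by omega
        exact hv ⟨v.val - 1, by omega⟩
          (Or.inr ⟨show v.val = v.val - 1 + 1 by omega, show k ≤ v.val - 1 by omega⟩)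
    · rintro hv y (⟨h1, h2⟩ | ⟨h1, h2⟩) <;> omega
  have hstep : ∀ u v : Fin n, Q.arr u v → e.symm u < e.symm v := by
    intro u v huv
    have hu := hgval u
    have hv := hgval v
    rcases huv with ⟨h1, h2⟩ | ⟨h1, h2⟩
    · have hukv : u.val < k := by omega
      have ha : e.symm u ∈ C1 := hloc1 u hukv
      rcases Nat.eq_or_lt_of_le h2 with heq | hlt
      · have hb : e.symm v = z := hlocz v heq
        rw [hb]
        exact lt_of_le_of_ne (hzle _) (hC1ne _ ha)
      · have hb : e.symm v ∈ C1 := hloc1 v hlt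
        have hru : (C1.filter (fun b => b < e.symm u)).card = u.val := by
          rw [← hf1 _ ha]; exact hu
        have hrv : (C1.filter (fun b => b < e.symm v)).card = v.val := by
          rw [← hf1 _ hb]; exact hv
        have hne : e.symm u ≠ e.symm v := by
          intro h; rw [h] at hru; omega
        rcases hch1 (Finset.mem_coe.2 ha) (Finset.mem_coe.2 hb) hne with h | h
        · exact lt_of_le_of_ne h hne
        · exfalso
          have := hr1mono _ hb _ ha (lt_of_le_of_ne h (Ne.symm hne))
          omega
    · have huk : k < u.val := by omega
      have ha : e.symm u ∈ C2 := hloc2 u huk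
      rcases Nat.eq_or_lt_of_le h2 with heq | hlt
      · have hb : e.symm v = z := hlocz v heq.symm
        rw [hb]
        exact lt_of_le_of_ne (hzle _) (hC2ne _ ha)
      · have hb : e.symm v ∈ C2 := hloc2 v hlt
        have hru : n - 1 - (C2.filter (fun b => b < e.symm u)).card = u.val := by
          rw [← hf2 _ ha]; exact hu
        have hrv : n - 1 - (C2.filter (fun b => b < e.symm v)).card = v.val := by
          rw [← hf2 _ hb]; exact hv
        have hbu := hr2lt _ ha
        have hbv := hr2lt _ hb
        have hne : e.symm u ≠ e.symm v := by
          intro h; rw [h] at hru; omega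
        rcases hch2 (Finset.mem_coe.2 ha) (Finset.mem_coe.2 hb) hne with h | h
        · exact lt_of_le_of_ne h hne
        · exfalso
          have := hr2mono _ hb _ ha (lt_of_le_of_ne h (Ne.symm hne))
          omega
  -- the alien set
  set F : Set (Fin n × Fin n) :=
    {p | e.symm p.1 ⋖ e.symm p.2 ∧ ¬ Relation.ReflTransGen Q.arr p.1 p.2} with hFdef
  have hFmem : ∀ p : Fin n × Fin n, p ∈ F ↔
      (e.symm p.1 ⋖ e.symm p.2 ∧ ¬ Relation.ReflTransGen Q.arr p.1 p.2) := by
    intro p; rw [hFdef]; rfl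
  have hstepQF : ∀ u v : Fin n, QFarr Q F u v → e.symm u < e.symm v := by
    rintro u v (h | h)
    · exact hstep u v h
    · exact ((hFmem (u, v)).1 h).1.lt
  have htrans : ∀ u v : Fin n, Relation.TransGen (QFarr Q F) u v →
      e.symm u < e.symm v := by
    intro u v h
    induction h with
    | single h' => exact hstepQF _ _ h'
    | tail _ h' ih => exact ih.trans (hstepQF _ _ h')
  have hrtg : ∀ u v : Fin n, Relation.ReflTransGen (QFarr Q F) u v →
      e.symm u ≤ e.symm v := by
    intro u v h
    induction h with
    | refl => exact le_rfl
    | tail _ h' ih => exact ih.trans (hstepQF _ _ h').le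
  have hreachL : ∀ d : ℕ, ∀ v : Fin n, v.val + d = k →
      Relation.ReflTransGen Q.arr v ⟨k, hkn⟩ := by
    intro d
    induction d with
    | zero =>
      intro v hv
      have hveq : v = ⟨k, hkn⟩ := Fin.ext (show v.val = k by omega)
      exact hveq ▸ Relation.ReflTransGen.refl
    | succ d ih =>
      intro v hv
      refine Relation.ReflTransGen.head (b := ⟨v.val + 1, by omega⟩) ?_ (ih _ ?_)
      · exact Or.inl ⟨rfl, show v.val + 1 ≤ k by omega⟩
      · show v.val + 1 + d = k; omega
  have hreachR : ∀ d : ℕ, ∀ v : Fin n, v.val = k + d →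
      Relation.ReflTransGen Q.arr v ⟨k, hkn⟩ := by
    intro d
    induction d with
    | zero =>
      intro v hv
      have hveq : v = ⟨k, hkn⟩ := Fin.ext (show v.val = k by omega)
      exact hveq ▸ Relation.ReflTransGen.refl
    | succ d ih =>
      intro v hv
      have hvn := v.isLt
      refine Relation.ReflTransGen.head (b := ⟨v.val - 1, by omega⟩) ?_ (ih _ ?_)
      · exact Or.inr ⟨show v.val = v.val - 1 + 1 by omega, show k ≤ v.val - 1 by omega⟩
      · show v.val - 1 = k + d; omega
  have hreach : ∀ v : Fin n, Relation.ReflTransGen Q.arr v ⟨k, hkn⟩ := by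
    intro v
    rcases le_or_gt v.val k with h | h
    · exact hreachL (k - v.val) v (by omega)
    · exact hreachR (v.val - k) v (by omega)
  refine ⟨Q, ⟨⟨k, hkn⟩, (hsink_iff _).2 rfl, fun v hv => Fin.ext ((hsink_iff v).1 hv)⟩,
    F, ⟨?_, ?_, ?_, ?_⟩, e, fun x y => ⟨?_, ?_⟩⟩
  · -- sameSupp
    intro p _
    exact ⟨⟨k, hkn⟩, (hsink_iff _).2 rfl, hreach p.1, hreach p.2⟩
  · -- targetNotSource
    intro p _ hsrc
    by_contra hcon
    push_neg at hcon
    have hlt := p.2.isLt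
    rcases le_or_gt p.2.val k with h | h
    · exact hsrc ⟨p.2.val - 1, by omega⟩
        (Or.inl ⟨show p.2.val = p.2.val - 1 + 1 by omega, h⟩)
    · exact hsrc ⟨p.2.val + 1, by omega⟩
        (Or.inr ⟨rfl, by omega⟩)
  · -- uniquePath
    intro p hp l hchain
    cases l with
    | nil => rfl
    | cons w l' =>
      exfalso
      rw [List.cons_append] at hchain; simp only [List.Chain] at hchain; rw [List.isChain_cons_cons] at hchain
      have h1 : e.symm p.1 < e.symm w := hstepQF _ _ hchain.1
      have h2 : e.symm w < e.symm p.2 :=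
        htrans _ _ (chain_append_transGen _ _ _ hchain.2)
      exact ((hFmem p).1 hp).1.2 h1 h2
  · -- acyclic
    intro x h
    exact absurd (htrans _ _ h) (lt_irrefl _)
  · -- forward
    intro hxy
    haveI : LocallyFiniteOrder P := Fintype.toLocallyFiniteOrder
    have hcov := le_iff_reflTransGen_covBy.mp hxy
    show Relation.ReflTransGen (QFarr Q F) (e x) (e y)
    clear hxy
    induction hcov with
    | refl => exact Relation.ReflTransGen.refl
    | tail _ hcb ih =>
      refine Relation.ReflTransGen.trans ih ?_
      rename_i b' c' _
      by_cases hq : Relation.ReflTransGen Q.arr (e b') (e c')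
      · exact Relation.ReflTransGen.mono (fun a b h => Or.inl h) _ _ hq
      · refine Relation.ReflTransGen.single (Or.inr ((hFmem (e b', e c')).2 ⟨?_, hq⟩))
        rw [Equiv.symm_apply_apply, Equiv.symm_apply_apply]
        exact hcb
  · -- backward
    intro h
    have h2 := hrtg _ _ h
    rw [Equiv.symm_apply_apply, Equiv.symm_apply_apply] at h2
    exact h2
end

section
/- Let P be a poset of type A with at least two maximal elements, and let z be a maximal element of P having exactly one neighbor. Then both the down-cone D(z) and the peak-subposet P̄ = ⋃_{w ∈ max P, w ≠ z} D(w), each equipped with the induced order, are posets of type A; in particular, P̄ is connected. -/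
/-- Let `P` be a poset of type `A` with at least two maximal
elements and let `z` be a maximal element having exactly one neighbor. Then both
the down-cone `D(z)` and the peak-subposet `P̄ = ⋃_{w maximal, w ≠ z} D(w)`, with
the induced orders, are posets of type `A` (in particular `P̄` is connected). -/
theorem downcone_and_complement_are_typeA {P : Type*} [Fintype P] [PartialOrder P]
    (hA : IsTypeA (fun x y : P => x ≤ y))
    (htwo : ∃ z w : P, RIsMax (fun x y : P => x ≤ y) z ∧
      RIsMax (fun x y : P => x ≤ y) w ∧ z ≠ w)
    (z : P) (hz : RIsMax (fun x y : P => x ≤ y) z)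
    (hone : ∃! z' : P, z' ∈ NeighborSet (fun x y : P => x ≤ y) z) :
    IsTypeA (fun a b : {x : P // x ≤ z} => (a : P) ≤ (b : P)) ∧
    IsTypeA (fun a b : {x : P // ∃ w : P, RIsMax (fun u v : P => u ≤ v) w ∧ w ≠ z ∧ x ≤ w} =>
      (a : P) ≤ (b : P)) := by
  classical
  obtain ⟨hconn, hR1, hR2, hR3, hCr⟩ := hA
  obtain ⟨z₀, hz₀mem, hz₀uniq⟩ := hone
  obtain ⟨hz₀max, hz₀ne, -⟩ := hz₀mem
  -- abbreviation for membership in P̄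
  set Pbar : P → Prop :=
    fun x => ∃ w : P, RIsMax (fun u v : P => u ≤ v) w ∧ w ≠ z ∧ x ≤ w with hPbar
  have exmax : ∀ x : P, ∃ m : P, RIsMax (fun u v : P => u ≤ v) m ∧ x ≤ m := by
    intro x
    obtain ⟨m, hxm, hm⟩ := Finite.exists_le_maximal (p := fun _ : P => True) trivial (a := x)
    exact ⟨m, fun y h => hm.2 trivial h, hxm⟩
  have notPbar_le_z : ∀ u : P, ¬ Pbar u → u ≤ z := by
    intro u hu
    obtain ⟨m, hm, hum⟩ := exmax u
    by_cases hmz : m = z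
    · exact hmz ▸ hum
    · exact absurd ⟨m, hm, hmz, hum⟩ hu
  have le_z0 : ∀ x : P, Pbar x → x ≤ z → x ≤ z₀ := by
    rintro x ⟨w, hwmax, hwne, hxw⟩ hxz
    have hw : w = z₀ := hz₀uniq w ⟨hwmax, hwne, ⟨x, hxz, hxw⟩⟩
    exact hw ▸ hxw
  constructor
  · -- the down-cone D(z)
    have hmax₁ : ∀ w : {x : P // x ≤ z},
        RIsMax (fun a b : {x : P // x ≤ z} => (a : P) ≤ (b : P)) w → (w : P) = z := by
      intro w hw
      exact le_antisymm w.2 (hw ⟨z, le_refl z⟩ w.2)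
    haveI : Nonempty {x : P // x ≤ z} := ⟨⟨z, le_refl z⟩⟩
    refine ⟨?_, ?_, ?_, ?_, ?_⟩
    · -- connectedness
      have reachz : ∀ a : {x : P // x ≤ z},
          (RCompGraph (fun a b : {x : P // x ≤ z} => (a : P) ≤ (b : P))).Reachable
            a ⟨z, le_refl z⟩ := by
        intro a
        by_cases h : (a : P) = z
        · rw [show a = (⟨z, le_refl z⟩ : {x : P // x ≤ z}) from Subtype.ext h]
        · exact SimpleGraph.Adj.reachable ⟨fun e => h (congrArg Subtype.val e), Or.inl a.2⟩
      exact ⟨fun a b => (reachz a).trans (reachz b).symm⟩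
    · rintro ⟨w, a, b, c, hw, hab, hac, hbc, iab, iac, ibc, la, lb, lc⟩
      have hwz := hmax₁ w hw
      obtain ⟨la1, la2⟩ := la
      obtain ⟨lb1, lb2⟩ := lb
      obtain ⟨lc1, lc2⟩ := lc
      exact hR1 ⟨z, (a : P), (b : P), (c : P), hz,
        fun h => hab (Subtype.ext h), fun h => hac (Subtype.ext h),
        fun h => hbc (Subtype.ext h), iab, iac, ibc,
        ⟨le_trans la1 hwz.le, fun h => la2 (le_trans hwz.le h)⟩,
        ⟨le_trans lb1 hwz.le, fun h => lb2 (le_trans hwz.le h)⟩,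
        ⟨le_trans lc1 hwz.le, fun h => lc2 (le_trans hwz.le h)⟩⟩
    · rintro ⟨z₁, z₂, y, x, h1, h2, hne, -, -, -⟩
      exact hne (Subtype.ext ((hmax₁ z₁ h1).trans (hmax₁ z₂ h2).symm))
    · rintro ⟨z₁, z₂, z₃, x, h1, h2, h3, h12, -, -, -, -, -⟩
      exact h12 (Subtype.ext ((hmax₁ z₁ h1).trans (hmax₁ z₂ h2).symm))
    · rintro n ⟨zz, xx, hzinj, -, hzmax, -, -, -⟩
      have h01 : (0 : Fin (n + 2)) ≠ 1 := by
        intro h; exact absurd (congrArg Fin.val h) (by norm_num)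
      exact h01 (hzinj (Subtype.ext ((hmax₁ _ (hzmax 0)).trans (hmax₁ _ (hzmax 1)).symm)))
  · -- the peak-subposet P̄
    have hPz0 : Pbar z₀ := ⟨z₀, hz₀max, hz₀ne, le_refl z₀⟩
    have maxS : ∀ w : {x : P // Pbar x},
        RIsMax (fun a b : {x : P // Pbar x} => (a : P) ≤ (b : P)) w →
        RIsMax (fun u v : P => u ≤ v) (w : P) := by
      intro w hw
      obtain ⟨m, hm, hmne, hwm⟩ := w.2
      have hmw : m ≤ (w : P) := hw ⟨m, ⟨m, hm, hmne, le_refl m⟩⟩ hwm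
      have : (w : P) = m := le_antisymm hwm hmw
      rw [this]; exact hm
    haveI : Nonempty {x : P // Pbar x} := ⟨⟨z₀, ⟨z₀, hz₀max, hz₀ne, le_refl z₀⟩⟩⟩
    refine ⟨?_, ?_, ?_, ?_, ?_⟩
    · -- connectedness
      have reach_of_le : ∀ (x y : P) (hx : Pbar x) (hy : Pbar y), x ≤ y →
          (RCompGraph (fun a b : {x : P // Pbar x} => (a : P) ≤ (b : P))).Reachable
            ⟨x, hx⟩ ⟨y, hy⟩ := by
        intro x y hx hy hxy
        by_cases h : x = y
        · rw [show (⟨x, hx⟩ : {x : P // Pbar x}) = ⟨y, hy⟩ from Subtype.ext h]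
        · exact SimpleGraph.Adj.reachable ⟨fun e => h (congrArg Subtype.val e), Or.inl hxy⟩
      have key : ∀ {x y : P}, (RCompGraph (fun u v : P => u ≤ v)).Walk x y →
          ∀ hy : Pbar y,
          (∀ hx : Pbar x,
            (RCompGraph (fun a b : {x : P // Pbar x} => (a : P) ≤ (b : P))).Reachable
              ⟨x, hx⟩ ⟨y, hy⟩) ∧
          (¬ Pbar x →
            (RCompGraph (fun a b : {x : P // Pbar x} => (a : P) ≤ (b : P))).Reachable
              ⟨z₀, hPz0⟩ ⟨y, hy⟩) := by
        intro x y w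
        induction w with
        | nil =>
          intro hy
          exact ⟨fun hx => SimpleGraph.Reachable.refl _, fun hx => absurd hy hx⟩
        | @cons u v y' h p ih =>
          intro hy
          obtain ⟨hne, hcomp⟩ := h
          by_cases hv : Pbar v
          · constructor
            · intro hu
              have hadj : (RCompGraph
                  (fun a b : {x : P // Pbar x} => (a : P) ≤ (b : P))).Adj ⟨u, hu⟩ ⟨v, hv⟩ :=
                ⟨fun e => hne (congrArg Subtype.val e), hcomp⟩
              exact hadj.reachable.trans ((ih hy).1 hv)
            · intro hu
              have huz : u ≤ z := notPbar_le_z u hu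
              have hvu : v ≤ u := by
                rcases hcomp with h1 | h1
                · obtain ⟨w', hw', hwne', hvw'⟩ := hv
                  exact absurd ⟨w', hw', hwne', le_trans h1 hvw'⟩ hu
                · exact h1
              have hvz0 : v ≤ z₀ := le_z0 v hv (le_trans hvu huz)
              exact ((reach_of_le v z₀ hv hPz0 hvz0).symm).trans ((ih hy).1 hv)
          · constructor
            · intro hu
              have hvz : v ≤ z := notPbar_le_z v hv
              have huv : u ≤ v := by
                rcases hcomp with h1 | h1
                · exact h1
                · obtain ⟨w', hw', hwne', huw'⟩ := hu
                  exact absurd ⟨w', hw', hwne', le_trans h1 huw'⟩ hv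
              have huz0 : u ≤ z₀ := le_z0 u hu (le_trans huv hvz)
              exact (reach_of_le u z₀ hu hPz0 huz0).trans ((ih hy).2 hv)
            · intro hu
              exact (ih hy).2 hv
      refine ⟨fun a b => ?_⟩
      obtain ⟨w⟩ := hconn.preconnected (a : P) (b : P)
      exact (key w b.2).1 a.2
    · rintro ⟨w, a, b, c, hw, hab, hac, hbc, iab, iac, ibc, la, lb, lc⟩
      exact hR1 ⟨(w : P), (a : P), (b : P), (c : P), maxS w hw,
        fun h => hab (Subtype.ext h), fun h => hac (Subtype.ext h),
        fun h => hbc (Subtype.ext h), iab, iac, ibc, la, lb, lc⟩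
    · rintro ⟨z₁, z₂, y, x, h1, h2, hne, l1, l2, l3⟩
      exact hR2 ⟨(z₁ : P), (z₂ : P), (y : P), (x : P), maxS z₁ h1, maxS z₂ h2,
        fun h => hne (Subtype.ext h), l1, l2, l3⟩
    · rintro ⟨z₁, z₂, z₃, x, h1, h2, h3, h12, h13, h23, l1, l2, l3⟩
      exact hR3 ⟨(z₁ : P), (z₂ : P), (z₃ : P), (x : P), maxS z₁ h1, maxS z₂ h2, maxS z₃ h3,
        fun h => h12 (Subtype.ext h), fun h => h13 (Subtype.ext h),
        fun h => h23 (Subtype.ext h), l1, l2, l3⟩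
    · rintro n ⟨zz, xx, hzinj, hxinj, hzmax, hxz, hinc, hlt⟩
      refine hCr n ⟨fun j => (zz j : P), fun i => (xx i : P), ?_, ?_, ?_, ?_, ?_, ?_⟩
      · exact fun i j h => hzinj (Subtype.ext h)
      · exact fun i j h => hxinj (Subtype.ext h)
      · exact fun j => maxS _ (hzmax j)
      · exact fun i j h => hxz i j (Subtype.ext h)
      · exact fun i j hij => hinc i j hij
      · exact fun i j => hlt i j
end
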